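/- arXiv:1907.10766 — 3 statements merged into one kernel-verified Lean document; each statement's English description precedes it below -/
import Mathlib

section
/- Over ZF + DC, Turing Determinacy follows from the statement: for every f : 2^ℕ → 2^ℕ which is uniformly Turing invariant on a cone, either f(x) ≥_T x on a cone, or f is constant up to ≡_T on a cone (there is y with f(x) ≡_T y for all x in a cone). Concretely: if every ≡_T-invariant two-valued UTI function (taking only values 0̄ = 000... and 0̄′, the Turing jump of 0̄) is constant up to ≡_T on a cone, then every ≡_T-invariant subset of 2^ℕ contains a cone or is disjoint from a cone. -/
/-! Oracle computability preliminaries: codes for oracle partial recursive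
functions, a standard numbering `φ`, Turing reducibility, and related notions. -/

namespace MC

/-- Codes for oracle partial recursive functions. -/
inductive OCode : Type
  | zero : OCode
  | succ : OCode
  | left : OCode
  | right : OCode
  | oracle : OCode
  | pair : OCode → OCode → OCode
  | comp : OCode → OCode → OCode
  | prec : OCode → OCode → OCode
  | rfind' : OCode → OCode

/-- Evaluation of an oracle code with oracle `o : ℕ → ℕ`. -/
def evalo (o : ℕ → ℕ) : OCode → ℕ →. ℕ
  | OCode.zero => pure 0
  | OCode.succ => fun n => Part.some (n + 1)
  | OCode.left => fun n => Part.some (Nat.unpair n).1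
  | OCode.right => fun n => Part.some (Nat.unpair n).2
  | OCode.oracle => fun n => Part.some (o n)
  | OCode.pair cf cg => fun n => Nat.pair <$> evalo o cf n <*> evalo o cg n
  | OCode.comp cf cg => fun n => evalo o cg n >>= evalo o cf
  | OCode.prec cf cg =>
    Nat.unpaired fun a n =>
      n.rec (evalo o cf a) fun y IH => do
        let i ← IH
        evalo o cg (Nat.pair a (Nat.pair y i))
  | OCode.rfind' cf =>
    Nat.unpaired fun a m =>
      (Nat.rfind fun n => (fun m => m = 0) <$> evalo o cf (Nat.pair a (n + m))).map (· + m)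

/-- A standard numbering of oracle codes. -/
def ofNatOCode : ℕ → OCode
  | 0 => OCode.zero
  | 1 => OCode.succ
  | 2 => OCode.left
  | 3 => OCode.right
  | 4 => OCode.oracle
  | n + 5 =>
    let m := n.div2.div2
    have hm : m < n + 5 := by
      simp only [m, Nat.div2_val]
      exact
        lt_of_le_of_lt (le_trans (Nat.div_le_self _ _) (Nat.div_le_self _ _))
          (Nat.lt_succ_of_le (Nat.le_add_right _ _))
    have _m1 : m.unpair.1 < n + 5 := lt_of_le_of_lt m.unpair_left_le hm
    have _m2 : m.unpair.2 < n + 5 := lt_of_le_of_lt m.unpair_right_le hm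
    match n.bodd, n.div2.bodd with
    | false, false => OCode.pair (ofNatOCode m.unpair.1) (ofNatOCode m.unpair.2)
    | false, true  => OCode.comp (ofNatOCode m.unpair.1) (ofNatOCode m.unpair.2)
    | true , false => OCode.prec (ofNatOCode m.unpair.1) (ofNatOCode m.unpair.2)
    | true , true  => OCode.rfind' (ofNatOCode m)
decreasing_by all_goals first | exact _m1 | exact _m2 | exact hm

/-- `φ e x` is the `e`-th partial function computable with oracle `x ∈ 2^ℕ`. -/
def φ (e : ℕ) (x : ℕ → Bool) : ℕ →. ℕ :=
  evalo (fun n => cond (x n) 1 0) (ofNatOCode e)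

/-- `odot e x` ("`e ⊙_T x`") is `φ e x` when the latter is total with values in `{0,1}`
(read as an element of Cantor space), and undefined otherwise. -/
def odot (e : ℕ) (x : ℕ → Bool) : Part (ℕ → Bool) :=
  ⟨(∀ n, (φ e x n).Dom) ∧ ∀ n, ∀ m ∈ φ e x n, m ≤ 1,
   fun h n => decide ((φ e x n).get (h.1 n) = 1)⟩

/-- Turing reducibility: `x = φ_e^y` for some `e`. -/
def TRed (x y : ℕ → Bool) : Prop := ∃ e, x ∈ odot e y

/-- Turing equivalence. -/
def TEquiv (x y : ℕ → Bool) : Prop := TRed x y ∧ TRed y x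

open scoped Classical in
/-- `sdot (i,j) x` ("`(i,j) ˢ⊙_T x`") is `φ_i^x` if `φ_i^x ∈ 2^ℕ` and `φ_j^{φ_i^x} = x`,
and undefined otherwise. -/
noncomputable def sdot (p : ℕ × ℕ) (x : ℕ → Bool) : Part (ℕ → Bool) :=
  (odot p.1 x).bind fun y => if x ∈ odot p.2 y then Part.some y else Part.none

/-- The join of a sequence: `(⨁ₙ xₙ)(⟨i,j⟩) = x_j(i)`. -/
def joinSeq (f : ℕ → ℕ → Bool) : ℕ → Bool :=
  fun k => f (Nat.unpair k).2 (Nat.unpair k).1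

/-- The join of two elements of Cantor space. -/
def join2 (a b : ℕ → Bool) : ℕ → Bool :=
  fun n => if n % 2 = 0 then a (n / 2) else b ((n - 1) / 2)

/-- Prepending a bit to an element of Cantor space. -/
def consBit (b : Bool) (x : ℕ → Bool) : ℕ → Bool :=
  fun n => match n with
  | 0 => b
  | n + 1 => x n

open scoped Classical in
/-- The Turing jump: `x′(n) = 1` iff `n ∈ dom(φ_n^x)`. -/
noncomputable def jump (x : ℕ → Bool) : ℕ → Bool :=
  fun n => decide (φ n x n).Dom

/-- The constant-zero element of Cantor space. -/
def zeros : ℕ → Bool := fun _ => false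

end MC

/-- Turing Determinacy: every `≡_T`-invariant set contains a cone or is disjoint from a cone. -/
def TD : Prop :=
  ∀ A : Set (ℕ → Bool), (∀ x y, x ∈ A → MC.TEquiv x y → y ∈ A) →
    (∃ z, ∀ x, MC.TRed z x → x ∈ A) ∨ ∃ z, ∀ x, MC.TRed z x → x ∉ A

/-- `f` is uniformly Turing invariant on a cone. -/
def UTIonCone (f : (ℕ → Bool) → (ℕ → Bool)) : Prop :=
  ∃ (z : ℕ → Bool) (u : ℕ × ℕ → ℕ × ℕ),
    ∀ (p : ℕ × ℕ) (x : ℕ → Bool), MC.TRed z x →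
      ∀ w ∈ MC.sdot p x, MC.TRed z w → f w ∈ MC.sdot (u p) (f x)

namespace MC

lemma ofNatOCode_four : ofNatOCode 4 = OCode.oracle := by rw [ofNatOCode]

lemma phi_four (x : ℕ → Bool) (n : ℕ) : φ 4 x n = Part.some (cond (x n) 1 0) := by
  rw [φ, ofNatOCode_four]; rfl

lemma mem_odot_of (e : ℕ) (x v : ℕ → Bool)
    (hv : ∀ n, φ e x n = Part.some (cond (v n) 1 0)) : v ∈ odot e x := by
  refine ⟨⟨fun n => ?_, fun n m hm => ?_⟩, ?_⟩
  · rw [hv]; trivial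
  · rw [hv] at hm; rcases Part.mem_some_iff.mp hm with rfl
    cases v n <;> simp
  · funext n
    show decide ((φ e x n).get _ = 1) = v n
    rw [Part.get_eq_of_mem (a := cond (v n) 1 0) (by rw [hv]; exact Part.mem_some _)]
    cases v n <;> simp

lemma self_mem_odot_four (x : ℕ → Bool) : x ∈ odot 4 x :=
  mem_odot_of 4 x x (phi_four x)

lemma TRed.refl (x : ℕ → Bool) : TRed x x := ⟨4, self_mem_odot_four x⟩

lemma sdot_red (p : ℕ × ℕ) (x w : ℕ → Bool) (hw : w ∈ sdot p x) :
    TRed w x ∧ TRed x w := by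
  classical
  rcases Part.mem_bind_iff.mp hw with ⟨y, hy, hw'⟩
  split_ifs at hw' with hxy
  · rcases Part.mem_some_iff.mp hw' with rfl
    exact ⟨⟨p.1, hy⟩, ⟨p.2, hxy⟩⟩
  · exact absurd hw' (Part.notMem_none _)

lemma mem_sdot_id (y : ℕ → Bool) : y ∈ sdot (4, 4) y := by
  classical
  refine Part.mem_bind_iff.mpr ⟨y, self_mem_odot_four y, ?_⟩
  rw [if_pos (self_mem_odot_four y)]
  exact Part.mem_some y

end MC

namespace MC

/-- Replace the oracle in a code by another code. -/
def substO (d : OCode) : OCode → OCode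
  | OCode.zero => OCode.zero
  | OCode.succ => OCode.succ
  | OCode.left => OCode.left
  | OCode.right => OCode.right
  | OCode.oracle => d
  | OCode.pair cf cg => OCode.pair (substO d cf) (substO d cg)
  | OCode.comp cf cg => OCode.comp (substO d cf) (substO d cg)
  | OCode.prec cf cg => OCode.prec (substO d cf) (substO d cg)
  | OCode.rfind' cf => OCode.rfind' (substO d cf)

lemma evalo_substO (o o' : ℕ → ℕ) (d : OCode)
    (hd : ∀ k, evalo o d k = Part.some (o' k)) :
    ∀ c, evalo o (substO d c) = evalo o' c := by
  intro c
  induction c with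
  | zero => rfl
  | succ => rfl
  | left => rfl
  | right => rfl
  | oracle => funext n; simp [substO, evalo, hd n]
  | pair cf cg ihf ihg => funext n; simp [substO, evalo, ihf, ihg]
  | comp cf cg ihf ihg => funext n; simp [substO, evalo, ihf, ihg]
  | prec cf cg ihf ihg => funext n; simp [substO, evalo, ihf, ihg]
  | rfind' cf ihf => funext n; simp [substO, evalo, ihf]

end MC

namespace MC

/-- Encoding of oracle codes, inverse to `ofNatOCode`. -/
def encodeO : OCode → ℕ
  | OCode.zero => 0
  | OCode.succ => 1
  | OCode.left => 2
  | OCode.right => 3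
  | OCode.oracle => 4
  | OCode.pair cf cg => 4 * Nat.pair (encodeO cf) (encodeO cg) + 5
  | OCode.comp cf cg => 4 * Nat.pair (encodeO cf) (encodeO cg) + 7
  | OCode.prec cf cg => 4 * Nat.pair (encodeO cf) (encodeO cg) + 6
  | OCode.rfind' cf => 4 * encodeO cf + 8

lemma bodd_eq (n : ℕ) : n.bodd = decide (n % 2 = 1) := by
  induction n with
  | zero => rfl
  | succ k ih => rw [Nat.bodd_succ, ih]; rcases Nat.mod_two_eq_zero_or_one k with h | h <;>
      simp [Nat.succ_mod_two_eq_one_iff, Nat.succ_mod_two_eq_zero_iff, h]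

lemma ofNatOCode_encodeO : ∀ c, ofNatOCode (encodeO c) = c := by
  intro c
  induction c with
  | zero => rw [encodeO, ofNatOCode]
  | succ => rw [encodeO, ofNatOCode]
  | left => rw [encodeO, ofNatOCode]
  | right => rw [encodeO, ofNatOCode]
  | oracle => rw [encodeO, ofNatOCode]
  | pair cf cg ihf ihg =>
    set N := Nat.pair (encodeO cf) (encodeO cg) with hN
    have h : encodeO (OCode.pair cf cg) = (4 * N) + 5 := rfl
    have d1 : (4 * N).bodd = false := by simp only [Nat.div2_val, bodd_eq, decide_eq_false_iff_not]; omega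
    have d2 : (4 * N).div2.bodd = false := by simp only [Nat.div2_val, bodd_eq, decide_eq_false_iff_not]; omega
    have e3 : (4 * N).div2.div2 = N := by simp only [Nat.div2_val]; omega
    rw [h, ofNatOCode]
    simp only [d1, d2, e3]
    simp only [hN, Nat.unpair_pair, ihf, ihg]
  | comp cf cg ihf ihg =>
    set N := Nat.pair (encodeO cf) (encodeO cg) with hN
    have h : encodeO (OCode.comp cf cg) = (4 * N + 2) + 5 := rfl
    have d1 : (4 * N + 2).bodd = false := by simp only [Nat.div2_val, bodd_eq, decide_eq_false_iff_not]; omega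
    have d2 : (4 * N + 2).div2.bodd = true := by simp only [Nat.div2_val, bodd_eq, decide_eq_true_eq]; omega
    have e3 : (4 * N + 2).div2.div2 = N := by simp only [Nat.div2_val]; omega
    rw [h, ofNatOCode]
    simp only [d1, d2, e3]
    simp only [hN, Nat.unpair_pair, ihf, ihg]
  | prec cf cg ihf ihg =>
    set N := Nat.pair (encodeO cf) (encodeO cg) with hN
    have h : encodeO (OCode.prec cf cg) = (4 * N + 1) + 5 := rfl
    have d1 : (4 * N + 1).bodd = true := by simp only [Nat.div2_val, bodd_eq, decide_eq_true_eq]; omega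
    have d2 : (4 * N + 1).div2.bodd = false := by simp only [Nat.div2_val, bodd_eq, decide_eq_false_iff_not]; omega
    have e3 : (4 * N + 1).div2.div2 = N := by simp only [Nat.div2_val]; omega
    rw [h, ofNatOCode]
    simp only [d1, d2, e3]
    simp only [hN, Nat.unpair_pair, ihf, ihg]
  | rfind' cf ihf =>
    have h : encodeO (OCode.rfind' cf) = (4 * encodeO cf + 3) + 5 := rfl
    have d1 : (4 * encodeO cf + 3).bodd = true := by
      simp only [Nat.div2_val, bodd_eq, decide_eq_true_eq]; omega
    have d2 : (4 * encodeO cf + 3).div2.bodd = true := by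
      simp only [Nat.div2_val, bodd_eq, decide_eq_true_eq]; omega
    have e3 : (4 * encodeO cf + 3).div2.div2 = encodeO cf := by simp only [Nat.div2_val]; omega
    rw [h, ofNatOCode]
    simp only [d1, d2, e3, ihf]

end MC

namespace MC

private def odotAux (F : ℕ → Part ℕ) : Part (ℕ → Bool) :=
  ⟨(∀ n, (F n).Dom) ∧ ∀ n, ∀ m ∈ F n, m ≤ 1,
   fun h n => decide ((F n).get (h.1 n) = 1)⟩

lemma odot_eq_aux (e : ℕ) (x : ℕ → Bool) : odot e x = odotAux (φ e x) := rfl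

lemma odot_congr {e e' : ℕ} {x x' : ℕ → Bool} (h : φ e x = φ e' x') :
    odot e x = odot e' x' := by
  rw [odot_eq_aux, odot_eq_aux, h]

lemma odot_total {e : ℕ} {x b : ℕ → Bool} (hb : b ∈ odot e x) :
    ∀ k, φ e x k = Part.some (cond (b k) 1 0) := by
  rcases hb with ⟨⟨hD, hB⟩, hval⟩
  intro k
  obtain ⟨m, hm'⟩ : ∃ m, (φ e x k).get (hD k) = m := ⟨_, rfl⟩
  have hmem : m ∈ φ e x k := hm' ▸ Part.get_mem _
  have hle : m ≤ 1 := hB k m hmem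
  have hbk : b k = decide (m = 1) := by rw [← hval]; show decide _ = _; rw [hm']
  have hc : cond (b k) 1 0 = m := by rw [hbk]; interval_cases m <;> simp
  rw [hc]
  exact Part.eq_some_iff.mpr hmem

lemma TRed.trans {a b c : ℕ → Bool} (hab : TRed a b) (hbc : TRed b c) : TRed a c := by
  rcases hab with ⟨e, ha⟩
  rcases hbc with ⟨e', hb⟩
  refine ⟨encodeO (substO (ofNatOCode e') (ofNatOCode e)), ?_⟩
  have key : φ (encodeO (substO (ofNatOCode e') (ofNatOCode e))) c = φ e b := by
    show evalo _ (ofNatOCode (encodeO (substO (ofNatOCode e') (ofNatOCode e)))) = _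
    rw [ofNatOCode_encodeO]
    exact evalo_substO _ (fun n => cond (b n) 1 0) _ (odot_total hb) _
  rw [odot_congr key]
  exact ha

end MC

namespace MC

lemma jump_not_red : ¬ TRed (jump zeros) zeros := by
  classical
  rintro ⟨e, he⟩
  have h_tot : ∀ k, evalo (fun n => cond (zeros n) 1 0) (ofNatOCode e) k
      = Part.some (cond (jump zeros k) 1 0) := odot_total he
  set c : OCode := OCode.comp (OCode.rfind' OCode.left)
    (OCode.pair (ofNatOCode e) OCode.zero) with hc
  set c0 : ℕ := encodeO c with hc0
  have hdom_iff : ∀ n, ((φ c0 zeros n).Dom ↔ jump zeros n = false) := by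
    intro n
    show (evalo _ (ofNatOCode c0) n).Dom ↔ _
    rw [hc0, ofNatOCode_encodeO, hc]
    cases hj : jump zeros n <;>
      simp [evalo, h_tot, hj, Seq.seq, Nat.unpaired, Nat.rfind_dom, pure, PFun.pure]
    · exact Nat.rfind_dom.mpr ⟨0, Part.mem_some _, fun {m} h => absurd h (Nat.not_lt_zero m)⟩
    · intro hd; obtain ⟨k, hk, _⟩ := Nat.rfind_dom.mp hd; simp at hk
  cases hj : jump zeros c0
  · have hdom : (φ c0 zeros c0).Dom := (hdom_iff c0).mpr hj
    have : jump zeros c0 = true := by simp [jump, hdom]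
    rw [hj] at this; exact Bool.false_ne_true this
  · have hdom : (φ c0 zeros c0).Dom := by
      have : jump zeros c0 = decide (φ c0 zeros c0).Dom := by simp [jump]
      rw [hj] at this
      exact of_decide_eq_true this.symm
    have := (hdom_iff c0).mp hdom
    rw [hj] at this; simp at this

end MC

/-- TD follows from part I of uniform Martin's conjecture (in the form:
every function UTI on a cone is increasing on a cone or constant up to `≡_T` on a cone);
concretely, it suffices that every `≡_T`-invariant UTI function taking only the values
`0̄` and `0̄′` is constant up to `≡_T` on a cone. -/
theorem td_of_uniform_martin_I
    (h : ∀ f : (ℕ → Bool) → (ℕ → Bool),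
      (∀ x y, MC.TEquiv x y → f x = f y) →
      (∀ x, f x = MC.zeros ∨ f x = MC.jump MC.zeros) →
      UTIonCone f →
      ∃ y w, ∀ x, MC.TRed w x → MC.TEquiv (f x) y) :
    TD := by
  classical
  intro A hInv
  set f : (ℕ → Bool) → (ℕ → Bool) :=
    fun x => if x ∈ A then MC.zeros else MC.jump MC.zeros with hf
  have hfi : ∀ x y, MC.TEquiv x y → f x = f y := by
    intro x y hxy
    by_cases hx : x ∈ A
    · have hy : y ∈ A := hInv x y hx hxy
      simp [hf, hx, hy]
    · have hy : y ∉ A := fun hy => hx (hInv y x hy ⟨hxy.2, hxy.1⟩)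
      simp [hf, hx, hy]
  have hfv : ∀ x, f x = MC.zeros ∨ f x = MC.jump MC.zeros := by
    intro x
    by_cases hx : x ∈ A
    · left; simp [hf, hx]
    · right; simp [hf, hx]
  have hUTI : UTIonCone f := by
    refine ⟨MC.zeros, fun _ => (4, 4), ?_⟩
    intro p x _ w hw _
    have hre := MC.sdot_red p x w hw
    rw [hfi w x ⟨hre.1, hre.2⟩]
    exact MC.mem_sdot_id (f x)
  obtain ⟨y, w, hyw⟩ := h f hfi hfv hUTI
  have hw : MC.TEquiv (f w) y := hyw w (MC.TRed.refl w)
  by_cases hwA : w ∈ A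
  · left; refine ⟨w, fun x hx => ?_⟩
    by_contra hxA
    have h1 : MC.TEquiv (f x) y := hyw x hx
    rw [show f x = MC.jump MC.zeros by simp [hf, hxA]] at h1
    rw [show f w = MC.zeros by simp [hf, hwA]] at hw
    exact MC.jump_not_red (h1.1.trans hw.2)
  · right; refine ⟨w, fun x hx hxA => ?_⟩
    have h1 := hyw x hx
    rw [show f x = MC.zeros by simp [hf, hxA]] at h1
    rw [show f w = MC.jump MC.zeros by simp [hf, hwA]] at hw
    exact MC.jump_not_red (hw.1.trans h1.2)
end

section
/- For every x ∈ 2^ℕ, the equivalence relations ≈_T^x (i ≈ j iff φ_i^x = φ_j^x as partial functions) and =^{ce,x} (i ≈ j iff W_i^x = W_j^x, equality of domains) are computably bi-reducible: (≈_T^x) ≤_c (=^{ce,x}) and (=^{ce,x}) ≤_c (≈_T^x), via computable reductions that do not depend on x. -/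
namespace MC

/-- Encoding of oracle codes, inverse to `ofNatOCode`. -/
def encOCode : OCode → ℕ
  | .zero => 0
  | .succ => 1
  | .left => 2
  | .right => 3
  | .oracle => 4
  | .pair a b => 4 * Nat.pair (encOCode a) (encOCode b) + 5
  | .comp a b => 4 * Nat.pair (encOCode a) (encOCode b) + 7
  | .prec a b => 4 * Nat.pair (encOCode a) (encOCode b) + 6
  | .rfind' a => 4 * encOCode a + 8

private theorem bodd2 (m : ℕ) : (2 * m).bodd = false := by
  simp [Nat.bodd_mul]

theorem ofNatOCode_pair (a b : ℕ) :
    ofNatOCode (4 * Nat.pair a b + 5) =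
      OCode.pair (ofNatOCode a) (ofNatOCode b) := by
  rw [show 4 * Nat.pair a b + 5 = 2 * (2 * Nat.pair a b) + 5 by ring, ofNatOCode]
  simp [Nat.div2_val, bodd2, Nat.mul_div_cancel_left]

theorem ofNatOCode_comp (a b : ℕ) :
    ofNatOCode (4 * Nat.pair a b + 7) =
      OCode.comp (ofNatOCode a) (ofNatOCode b) := by
  rw [show 4 * Nat.pair a b + 7 = (2 * (2 * Nat.pair a b + 1)) + 5 by ring, ofNatOCode]
  simp [Nat.div2_val, bodd2, Nat.mul_div_cancel_left,
    show ∀ m : ℕ, (2 * m + 1) / 2 = m from fun m => by omega,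
    show ∀ m : ℕ, (2 * m + 1).bodd = true from fun m => by simp [Nat.bodd_add, bodd2]]

theorem ofNatOCode_prec (a b : ℕ) :
    ofNatOCode (4 * Nat.pair a b + 6) =
      OCode.prec (ofNatOCode a) (ofNatOCode b) := by
  rw [show 4 * Nat.pair a b + 6 = (2 * (2 * Nat.pair a b) + 1) + 5 by ring, ofNatOCode]
  simp [Nat.div2_val, bodd2, Nat.mul_div_cancel_left,
    show ∀ m : ℕ, (2 * m + 1) / 2 = m from fun m => by omega,
    show ∀ m : ℕ, (2 * m + 1).bodd = true from fun m => by simp [Nat.bodd_add, bodd2]]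

theorem ofNatOCode_rfind' (a : ℕ) :
    ofNatOCode (4 * a + 8) = OCode.rfind' (ofNatOCode a) := by
  rw [show 4 * a + 8 = (2 * (2 * a + 1) + 1) + 5 by ring, ofNatOCode]
  simp [Nat.div2_val, bodd2, Nat.mul_div_cancel_left,
    show ∀ m : ℕ, (2 * m + 1) / 2 = m from fun m => by omega,
    show ∀ m : ℕ, (2 * m + 1).bodd = true from fun m => by simp [Nat.bodd_add, bodd2]]

theorem ofNat_enc : ∀ c : OCode, ofNatOCode (encOCode c) = c
  | .zero => by rw [encOCode, ofNatOCode]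
  | .succ => by rw [encOCode, ofNatOCode]
  | .left => by rw [encOCode, ofNatOCode]
  | .right => by rw [encOCode, ofNatOCode]
  | .oracle => by rw [encOCode, ofNatOCode]
  | .pair a b => by rw [encOCode, ofNatOCode_pair, ofNat_enc a, ofNat_enc b]
  | .comp a b => by rw [encOCode, ofNatOCode_comp, ofNat_enc a, ofNat_enc b]
  | .prec a b => by rw [encOCode, ofNatOCode_prec, ofNat_enc a, ofNat_enc b]
  | .rfind' a => by rw [encOCode, ofNatOCode_rfind', ofNat_enc a]

end MC

namespace MC

def cId : OCode := .pair .left .right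
def cPred : OCode := .comp (.prec .zero (.comp .left .right)) (.pair .zero cId)
def cSub : OCode := .prec cId (.comp cPred (.comp .right .right))
def cAdd : OCode := .prec cId (.comp .succ (.comp .right .right))
def cDist : OCode := .comp cAdd (.pair cSub (.comp cSub (.pair .right .left)))

@[simp] theorem evalo_zero (o : ℕ → ℕ) (n : ℕ) : evalo o .zero n = Part.some 0 := rfl
@[simp] theorem evalo_succ (o : ℕ → ℕ) (n : ℕ) : evalo o .succ n = Part.some (n + 1) := rfl
@[simp] theorem evalo_left (o : ℕ → ℕ) (n : ℕ) :
    evalo o .left n = Part.some (Nat.unpair n).1 := rfl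
@[simp] theorem evalo_right (o : ℕ → ℕ) (n : ℕ) :
    evalo o .right n = Part.some (Nat.unpair n).2 := rfl
@[simp] theorem evalo_comp (o : ℕ → ℕ) (cf cg : OCode) (n : ℕ) :
    evalo o (.comp cf cg) n = (evalo o cg n).bind (fun k => evalo o cf k) := rfl
theorem evalo_pairc (o : ℕ → ℕ) (cf cg : OCode) (n : ℕ) :
    evalo o (.pair cf cg) n =
      (evalo o cf n).bind fun a => (evalo o cg n).map (Nat.pair a) := by
  show Nat.pair <$> evalo o cf n <*> evalo o cg n = _
  simp [Seq.seq, Part.bind_map, Part.map_eq_map]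
theorem evalo_prec_zero (o : ℕ → ℕ) (cf cg : OCode) (a : ℕ) :
    evalo o (.prec cf cg) (Nat.pair a 0) = evalo o cf a := by
  simp [evalo, Nat.unpaired]
theorem evalo_prec_succ (o : ℕ → ℕ) (cf cg : OCode) (a n : ℕ) :
    evalo o (.prec cf cg) (Nat.pair a (n + 1)) =
      (evalo o (.prec cf cg) (Nat.pair a n)).bind fun i =>
        evalo o cg (Nat.pair a (Nat.pair n i)) := by
  conv_lhs => rw [evalo]
  conv_rhs => rw [evalo]
  simp [Nat.unpaired]

@[simp] theorem evalo_cId (o : ℕ → ℕ) (n : ℕ) : evalo o cId n = Part.some n := by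
  simp [cId, evalo_pairc]

@[simp] theorem evalo_cPred (o : ℕ → ℕ) (n : ℕ) : evalo o cPred n = Part.some (n - 1) := by
  have key : ∀ m : ℕ, evalo o (.prec .zero (.comp .left .right)) (Nat.pair 0 m)
      = Part.some (m - 1) := by
    intro m
    induction m with
    | zero => rw [evalo_prec_zero]; simp
    | succ m ih => rw [evalo_prec_succ, ih]; simp
  simp [cPred, evalo_pairc, key]

@[simp] theorem evalo_cSub (o : ℕ → ℕ) (x y : ℕ) :
    evalo o cSub (Nat.pair x y) = Part.some (x - y) := by
  induction y with
  | zero => rw [cSub, evalo_prec_zero]; simp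
  | succ y ih =>
    rw [cSub] at ih ⊢
    rw [evalo_prec_succ, ih]
    simp [Nat.sub_sub]

@[simp] theorem evalo_cAdd (o : ℕ → ℕ) (x y : ℕ) :
    evalo o cAdd (Nat.pair x y) = Part.some (x + y) := by
  induction y with
  | zero => rw [cAdd, evalo_prec_zero]; simp
  | succ y ih =>
    rw [cAdd] at ih ⊢
    rw [evalo_prec_succ, ih]
    simp only [Part.bind_some, evalo_comp, evalo_right, Nat.unpair_pair, evalo_succ,
      Nat.add_succ]

set_option maxRecDepth 4000 in
@[simp] theorem evalo_cDist (o : ℕ → ℕ) (x y : ℕ) :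
    evalo o cDist (Nat.pair x y) = Part.some ((x - y) + (y - x)) := by
  rw [cDist, evalo_comp, evalo_pairc, evalo_comp, evalo_pairc]
  simp only [evalo_left, evalo_right, Nat.unpair_pair, Part.bind_some, Part.map_some,
    evalo_cSub, evalo_cAdd]

end MC

namespace MC

def cGraphAux (c : OCode) : OCode :=
  .comp cDist (.pair (.comp c (.comp .left .left)) (.comp .right .left))

def cGraph (c : OCode) : OCode :=
  .comp (.rfind' (cGraphAux c)) (.pair cId .zero)

theorem evalo_cGraphAux (o : ℕ → ℕ) (c : OCode) (k s : ℕ) :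
    evalo o (cGraphAux c) (Nat.pair k s) =
      (evalo o c (Nat.unpair k).1).map
        (fun r => (r - (Nat.unpair k).2) + ((Nat.unpair k).2 - r)) := by
  rw [cGraphAux, evalo_comp, evalo_pairc]
  simp only [evalo_comp, evalo_left, evalo_right, Nat.unpair_pair, Part.bind_some]
  ext r
  simp only [Part.mem_bind_iff, Part.mem_map_iff, Part.mem_some_iff, evalo_cDist]
  constructor
  · rintro ⟨a, ⟨b, hb, a1, rfl, rfl⟩, h⟩
    rw [evalo_cDist, Part.mem_some_iff] at h
    exact ⟨b, hb, h.symm⟩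
  · rintro ⟨b, hb, rfl⟩
    exact ⟨Nat.pair b (Nat.unpair k).2, ⟨b, hb, _, rfl, rfl⟩, by
      rw [evalo_cDist, Part.mem_some_iff]⟩

theorem cGraph_dom (o : ℕ → ℕ) (c : OCode) (k : ℕ) :
    (evalo o (cGraph c) k).Dom ↔ (Nat.unpair k).2 ∈ evalo o c (Nat.unpair k).1 := by
  rw [cGraph, evalo_comp, evalo_pairc]
  simp only [evalo_cId, evalo_zero, Part.bind_some, Part.map_some]
  conv_lhs => rw [evalo]
  simp only [Nat.unpaired, Nat.unpair_pair, Nat.add_zero]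
  have hdom : ∀ (f : ℕ → ℕ) (p : Part ℕ), (p.map f).Dom ↔ p.Dom := fun _ _ => Iff.rfl
  rw [hdom]
  refine Nat.rfind_dom.trans ?_
  constructor
  · rintro ⟨n, hn, -⟩
    rw [evalo_cGraphAux] at hn
    simp only [Part.map_eq_map, Part.map_map, Part.mem_map_iff] at hn
    obtain ⟨r, hr, hr0⟩ := hn
    simp only [Function.comp, decide_eq_true_eq] at hr0
    have : r = (Nat.unpair k).2 := by omega
    rwa [this] at hr
  · intro h
    refine ⟨0, ?_, fun {m} hm => absurd hm (Nat.not_lt_zero m)⟩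
    rw [evalo_cGraphAux]
    simp only [Part.map_eq_map, Part.map_map, Part.mem_map_iff]
    exact ⟨(Nat.unpair k).2, h, by simp [Function.comp]⟩

end MC

namespace MC

/-- The first reduction, numerically. -/
def vN (e : ℕ) : ℕ :=
  4 * Nat.pair
      (4 * (4 * Nat.pair (encOCode cDist)
          (4 * Nat.pair (4 * Nat.pair e (encOCode (OCode.comp .left .left)) + 7)
              (encOCode (OCode.comp .right .left)) + 5) + 7) + 8)
      (encOCode (OCode.pair cId .zero)) + 7

theorem ofNat_vN (e : ℕ) : ofNatOCode (vN e) = cGraph (ofNatOCode e) := by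
  rw [vN, ofNatOCode_comp, ofNatOCode_rfind', ofNatOCode_comp, ofNatOCode_pair,
    ofNatOCode_comp, ofNat_enc, ofNat_enc, ofNat_enc, ofNat_enc]
  rfl

/-- The second reduction, numerically. -/
def wN (e : ℕ) : ℕ := 4 * Nat.pair 0 e + 7

theorem ofNat_wN (e : ℕ) : ofNatOCode (wN e) = OCode.comp .zero (ofNatOCode e) := by
  rw [wN, ofNatOCode_comp, show ofNatOCode 0 = OCode.zero from by rw [ofNatOCode]]

theorem primrec_step {f : ℕ → ℕ} (hf : Primrec f) (a b : ℕ) :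
    Primrec (fun e => a * f e + b) :=
  Primrec.nat_add.comp (Primrec.nat_mul.comp (Primrec.const a) hf) (Primrec.const b)

theorem computable_vN : Computable vN := by
  have h1 : Primrec (fun e => 4 * Nat.pair e (encOCode (OCode.comp .left .left)) + 7) :=
    primrec_step (Primrec₂.natPair.comp Primrec.id (Primrec.const _)) 4 7
  have h2 := primrec_step (Primrec₂.natPair.comp h1 (Primrec.const
    (encOCode (OCode.comp .right .left)))) 4 5
  have h3 := primrec_step (Primrec₂.natPair.comp (Primrec.const (encOCode cDist)) h2) 4 7
  have h4 := primrec_step h3 4 8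
  have h5 := primrec_step (Primrec₂.natPair.comp h4 (Primrec.const
    (encOCode (OCode.pair cId .zero)))) 4 7
  exact h5.to_comp

theorem computable_wN : Computable wN :=
  (primrec_step (Primrec₂.natPair.comp (Primrec.const 0) Primrec.id) 4 7).to_comp

theorem phi_vN_dom (e : ℕ) (x : ℕ → Bool) (n : ℕ) :
    (φ (vN e) x n).Dom ↔ (Nat.unpair n).2 ∈ φ e x (Nat.unpair n).1 := by
  show (evalo _ (ofNatOCode (vN e)) n).Dom ↔ _
  rw [ofNat_vN]
  exact cGraph_dom _ _ n

theorem phi_wN (e : ℕ) (x : ℕ → Bool) (n : ℕ) :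
    φ (wN e) x n = (φ e x n).bind fun _ => Part.some 0 := by
  show evalo _ (ofNatOCode (wN e)) n = _
  rw [ofNat_wN, evalo_comp]
  rfl

theorem bind_zero_dom (p : Part ℕ) : ((p.bind fun _ => Part.some 0).Dom) ↔ p.Dom := by
  rw [Part.dom_iff_mem, Part.dom_iff_mem]
  simp [Part.mem_bind_iff]

end MC

/-- `≈_T^x` and `=^{ce,x}` are computably bi-reducible, via computable
reductions not depending on `x`. -/
theorem approx_ce_bireducible :
    ∃ v w : ℕ → ℕ, Computable v ∧ Computable w ∧
      ∀ x : ℕ → Bool,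
        (∀ i j, (MC.φ i x = MC.φ j x ↔
          ∀ n, ((MC.φ (v i) x n).Dom ↔ (MC.φ (v j) x n).Dom))) ∧
        (∀ i j, ((∀ n, (MC.φ i x n).Dom ↔ (MC.φ j x n).Dom) ↔
          MC.φ (w i) x = MC.φ (w j) x)) := by
  refine ⟨MC.vN, MC.wN, MC.computable_vN, MC.computable_wN, fun x => ⟨?_, ?_⟩⟩
  · intro i j
    constructor
    · intro h n
      rw [MC.phi_vN_dom, MC.phi_vN_dom, h]
    · intro h
      funext n
      ext m
      have := h (Nat.pair n m)
      rwa [MC.phi_vN_dom, MC.phi_vN_dom, Nat.unpair_pair] at this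
  · intro i j
    constructor
    · intro h
      funext n
      ext m
      simp only [MC.phi_wN, Part.mem_bind_iff, Part.mem_some_iff]
      constructor
      · rintro ⟨a, ha, rfl⟩
        obtain ⟨b, hb⟩ := Part.dom_iff_mem.1 ((h n).1 (Part.dom_iff_mem.2 ⟨a, ha⟩))
        exact ⟨b, hb, rfl⟩
      · rintro ⟨a, ha, rfl⟩
        obtain ⟨b, hb⟩ := Part.dom_iff_mem.1 ((h n).2 (Part.dom_iff_mem.2 ⟨a, ha⟩))
        exact ⟨b, hb, rfl⟩
    · intro h n
      have h' : (MC.φ (MC.wN i) x n).Dom ↔ (MC.φ (MC.wN j) x n).Dom := by rw [h]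
      rwa [MC.phi_wN, MC.phi_wN, MC.bind_zero_dom, MC.bind_zero_dom] at h'
end

section
/- There exist 2^{ℵ₀} many equivalence relations on ℕ that are pairwise incomparable under computable reducibility ≤_c. -/
/-- Computable reducibility of equivalence relations on `ℕ`. -/
def CRedP (R S : ℕ → ℕ → Prop) : Prop :=
  ∃ v : ℕ → ℕ, Computable v ∧ ∀ m n, (R m n ↔ S (v m) (v n))


namespace CredAC

open List

/-- `A` agrees with the finite condition `p` (a finite prefix of a characteristic function). -/
def Agrees (A : ℕ → Bool) (p : List Bool) : Prop :=
  ∀ i, i < p.length → A i = p.getD i false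

theorem getD_of_prefix {p q : List Bool} (h : p <+: q) {n : ℕ} (hn : n < p.length) :
    q.getD n false = p.getD n false := by
  obtain ⟨r, rfl⟩ := h
  exact List.getD_append _ _ _ _ hn

theorem agrees_of_prefix {A : ℕ → Bool} {p q : List Bool} (h : p <+: q) (hA : Agrees A q) :
    Agrees A p := by
  intro i hi
  rw [hA i (lt_of_lt_of_le hi h.length_le), getD_of_prefix h hi]

/-- Extend `p` up to position `n` (with `false`), placing bit `b` at position `n`. -/
def extL (p : List Bool) (n : ℕ) (b : Bool) : List Bool :=
  p ++ List.replicate (n - p.length) false ++ [b]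

theorem extL_prefix (p : List Bool) (n : ℕ) (b : Bool) : p <+: extL p n b :=
  ⟨List.replicate (n - p.length) false ++ [b], by simp [extL]⟩

theorem extL_length {p : List Bool} {n : ℕ} (h : p.length ≤ n) (b : Bool) :
    (extL p n b).length = n + 1 := by
  simp [extL]; omega

theorem extL_getD {p : List Bool} {n : ℕ} (h : p.length ≤ n) (b : Bool) :
    (extL p n b).getD n false = b := by
  rw [extL, List.append_assoc,
    List.getD_append_right _ _ _ _ (by simpa using h),
    List.getD_append_right _ _ _ _ (by simp)]
  simp

theorem agrees_extL {A : ℕ → Bool} {p : List Bool} {n : ℕ} {b : Bool} (h : p.length ≤ n)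
    (hA : Agrees A (extL p n b)) : A n = b := by
  have := hA n (by rw [extL_length h]; omega)
  rwa [extL_getD h] at this

/-- The forcing lemma: any pair of conditions can be extended so as to kill the
"reduction equation" `A = P ∪ (D ∩ g⁻¹ B)`. -/
theorem force (P D : ℕ → Prop) (g : ℕ → ℕ) (p q : List Bool) :
    ∃ p' q' : List Bool, p <+: p' ∧ q <+: q' ∧
      ∀ A B : ℕ → Bool, Agrees A p' → Agrees B q' →
        ¬ (∀ n, A n = true ↔ (P n ∨ (D n ∧ B (g n) = true))) := by
  classical
  by_cases h1 : ∃ n, p.length ≤ n ∧ P n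
  · obtain ⟨n, hn, hP⟩ := h1
    refine ⟨extL p n false, q, extL_prefix _ _ _, List.prefix_refl _, ?_⟩
    intro A B hA _ hbad
    have hfalse : A n = false := agrees_extL hn hA
    have := (hbad n).mpr (Or.inl hP)
    simp [hfalse] at this
  · push_neg at h1
    by_cases h2 : ∃ n, p.length ≤ n ∧ ¬ D n
    · obtain ⟨n, hn, hD⟩ := h2
      refine ⟨extL p n true, q, extL_prefix _ _ _, List.prefix_refl _, ?_⟩
      intro A B hA _ hbad
      have htrue : A n = true := agrees_extL hn hA
      rcases (hbad n).mp htrue with hP | ⟨hD', _⟩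
      · exact h1 n hn hP
      · exact hD hD'
    · push_neg at h2
      by_cases h3 : ∃ n, p.length ≤ n ∧ q.length ≤ g n
      · obtain ⟨n, hn, hgn⟩ := h3
        refine ⟨extL p n true, extL q (g n) false, extL_prefix _ _ _, extL_prefix _ _ _, ?_⟩
        intro A B hA hB hbad
        have htrue : A n = true := agrees_extL hn hA
        have hBfalse : B (g n) = false := agrees_extL hgn hB
        rcases (hbad n).mp htrue with hP | ⟨_, hBt⟩
        · exact h1 n hn hP
        · simp [hBfalse] at hBt
      · push_neg at h3
        set n := p.length with hn
        set b := q.getD (g n) false with hb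
        refine ⟨extL p n (!b), q, extL_prefix _ _ _, List.prefix_refl _, ?_⟩
        intro A B hA hB hbad
        have hAn : A n = !b := agrees_extL (le_refl _) hA
        have hBn : B (g n) = b := hB (g n) (h3 n (le_refl _))
        have hDn : D n := h2 n (le_refl _)
        have hPn : ¬ P n := h1 n (le_refl _)
        cases hbb : b
        · have := (hbad n).mp (by rw [hAn, hbb]; rfl)
          rcases this with hP | ⟨_, hBt⟩
          · exact hPn hP
          · rw [hBn, hbb] at hBt; cases hBt
        · have := (hbad n).mpr (Or.inr ⟨hDn, by rw [hBn, hbb]⟩)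
          rw [hAn, hbb] at this; cases this

/-! ### The perfect tree construction -/

/-- The first `s` bits of `x`, as a list. -/
def str (x : ℕ → Bool) (s : ℕ) : List Bool := (List.range s).map x

theorem str_succ (x : ℕ → Bool) (s : ℕ) : str x (s + 1) = str x s ++ [x s] := by
  simp [str, List.range_succ]

theorem str_getD {x : ℕ → Bool} {i s : ℕ} (hi : i < s) : (str x s).getD i false = x i := by
  simp [str, List.getD_eq_getElem?_getD, List.getElem?_map, List.getElem?_range hi]

/-- All binary strings of length `s`. -/
def allStrings : ℕ → List (List Bool)
  | 0 => [[]]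
  | s + 1 => (allStrings s).flatMap fun σ => [σ ++ [false], σ ++ [true]]

theorem str_mem_allStrings (x : ℕ → Bool) : ∀ s, str x s ∈ allStrings s := by
  intro s
  induction s with
  | zero => simp [str, allStrings]
  | succ s ih =>
    rw [str_succ]
    simp only [allStrings, List.mem_flatMap]
    exact ⟨str x s, ih, by cases x s <;> simp⟩

/-- The list of requirements to be handled at stage `s + 1`. -/
def tasks (s : ℕ) : List (ℕ × List Bool × List Bool) :=
  (List.range (s + 1)).flatMap fun k =>
    (allStrings (s + 1)).flatMap fun σ =>
      (allStrings (s + 1)).map fun τ => (k, σ, τ)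

theorem tasks_mem {k s : ℕ} (hk : k ≤ s) {σ τ : List Bool}
    (hσ : σ ∈ allStrings (s + 1)) (hτ : τ ∈ allStrings (s + 1)) : (k, σ, τ) ∈ tasks s := by
  simp only [tasks, List.mem_flatMap, List.mem_map, List.mem_range]
  exact ⟨k, by omega, σ, hσ, τ, hτ, rfl⟩

section Construction

variable (e1 e2 : ℕ → List Bool → List Bool → List Bool)

/-- Handle one requirement `(k, σ, τ)` by extending the conditions at `σ` and `τ`. -/
def step (M : List Bool → List Bool) (t : ℕ × List Bool × List Bool) : List Bool → List Bool :=
  if t.2.1 = t.2.2 then M else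
    fun ρ => if ρ = t.2.1 then e1 t.1 (M t.2.1) (M t.2.2)
      else if ρ = t.2.2 then e2 t.1 (M t.2.1) (M t.2.2) else M ρ

/-- The assignment of conditions to nodes at stage `s`. -/
def level : ℕ → List Bool → List Bool
  | 0 => fun _ => []
  | s + 1 => (tasks s).foldl (step e1 e2) fun ρ => level s ρ.dropLast ++ [ρ.getLastD false]

/-- The branch of the tree determined by `x`. -/
def G (x : ℕ → Bool) (n : ℕ) : Bool := (level e1 e2 (n + 1) (str x (n + 1))).getD n false

/-- A task has been handled in state `M`. -/
def Done (M : List Bool → List Bool) (t : ℕ × List Bool × List Bool) : Prop :=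
  ∃ p q, e1 t.1 p q <+: M t.2.1 ∧ e2 t.1 p q <+: M t.2.2

theorem done_mono {M M' : List Bool → List Bool} (h : ∀ ρ, M ρ <+: M' ρ)
    {t : ℕ × List Bool × List Bool} (hd : Done e1 e2 M t) : Done e1 e2 M' t := by
  obtain ⟨p, q, h1, h2⟩ := hd
  exact ⟨p, q, h1.trans (h _), h2.trans (h _)⟩

variable (hp1 : ∀ k p q, p <+: e1 k p q) (hp2 : ∀ k p q, q <+: e2 k p q)

include hp1 hp2

theorem step_mono (M : List Bool → List Bool) (t : ℕ × List Bool × List Bool) (ρ : List Bool) :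
    M ρ <+: step e1 e2 M t ρ := by
  unfold step
  split
  · exact List.prefix_refl _
  · dsimp only
    split
    · next h => rw [h]; exact hp1 _ _ _
    · split
      · next h => rw [h]; exact hp2 _ _ _
      · exact List.prefix_refl _

theorem foldl_mono : ∀ (l : List (ℕ × List Bool × List Bool)) (M : List Bool → List Bool)
    (ρ : List Bool), M ρ <+: l.foldl (step e1 e2) M ρ := by
  intro l
  induction l with
  | nil => intro M ρ; exact List.prefix_refl _
  | cons t l ih =>
    intro M ρ
    exact (step_mono e1 e2 hp1 hp2 M t ρ).trans (ih _ ρ)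

theorem level_child_prefix (x : ℕ → Bool) (s : ℕ) :
    level e1 e2 s (str x s) ++ [x s] <+: level e1 e2 (s + 1) (str x (s + 1)) := by
  have h2 := foldl_mono e1 e2 hp1 hp2 (tasks s)
      (fun ρ => level e1 e2 s ρ.dropLast ++ [ρ.getLastD false]) (str x (s + 1))
  simp only [level]
  rw [str_succ] at h2 ⊢
  rw [List.dropLast_concat, List.getLastD_concat] at h2
  exact h2

theorem level_succ_mono (x : ℕ → Bool) (s : ℕ) :
    level e1 e2 s (str x s) <+: level e1 e2 (s + 1) (str x (s + 1)) :=
  (List.prefix_append _ _).trans (level_child_prefix e1 e2 hp1 hp2 x s)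

theorem level_mono (x : ℕ → Bool) {s t : ℕ} (h : s ≤ t) :
    level e1 e2 s (str x s) <+: level e1 e2 t (str x t) := by
  induction t with
  | zero => cases Nat.le_zero.mp h; exact List.prefix_refl _
  | succ t ih =>
    rcases Nat.lt_or_ge s (t + 1) with h' | h'
    · exact (ih (by omega)).trans (level_succ_mono e1 e2 hp1 hp2 x t)
    · have : s = t + 1 := by omega
      subst this; exact List.prefix_refl _

theorem level_length (x : ℕ → Bool) : ∀ s, s ≤ (level e1 e2 s (str x s)).length := by
  intro s
  induction s with
  | zero => simp
  | succ s ih =>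
    have h := (level_child_prefix e1 e2 hp1 hp2 x s).length_le
    simp only [List.length_append, List.length_cons, List.length_nil] at h
    omega

theorem G_eq (x : ℕ → Bool) {n t : ℕ} (h : n < (level e1 e2 t (str x t)).length) :
    G e1 e2 x n = (level e1 e2 t (str x t)).getD n false := by
  have h1 : n < (level e1 e2 (n + 1) (str x (n + 1))).length :=
    lt_of_lt_of_le (Nat.lt_succ_self n) (level_length e1 e2 hp1 hp2 x (n + 1))
  have hu1 := getD_of_prefix (p := level e1 e2 (n + 1) (str x (n + 1)))
    (level_mono e1 e2 hp1 hp2 x (le_max_right t (n + 1))) h1 (n := n)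
  have hu2 := getD_of_prefix (p := level e1 e2 t (str x t))
    (level_mono e1 e2 hp1 hp2 x (le_max_left t (n + 1))) h (n := n)
  show (level e1 e2 (n + 1) (str x (n + 1))).getD n false = _
  exact hu1.symm.trans hu2

theorem G_agrees (x : ℕ → Bool) (t : ℕ) : Agrees (G e1 e2 x) (level e1 e2 t (str x t)) :=
  fun _ hi => G_eq e1 e2 hp1 hp2 x hi

theorem foldl_done : ∀ (l : List (ℕ × List Bool × List Bool)) (M : List Bool → List Bool)
    (t : ℕ × List Bool × List Bool), t ∈ l → t.2.1 ≠ t.2.2 →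
    Done e1 e2 (l.foldl (step e1 e2) M) t := by
  intro l
  induction l with
  | nil => intro M t ht; cases ht
  | cons hd tl ih =>
    intro M t ht hne
    rcases List.mem_cons.mp ht with rfl | htl
    · have h1 : step e1 e2 M t t.2.1 = e1 t.1 (M t.2.1) (M t.2.2) := by
        simp [step, hne]
      have h2 : step e1 e2 M t t.2.2 = e2 t.1 (M t.2.1) (M t.2.2) := by
        simp [step, hne, Ne.symm hne]
      have hstep : Done e1 e2 (step e1 e2 M t) t := by
        refine ⟨M t.2.1, M t.2.2, ?_, ?_⟩
        · rw [h1]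
        · rw [h2]
      exact done_mono e1 e2 (fun ρ => foldl_mono e1 e2 hp1 hp2 tl _ ρ) hstep
    · exact ih _ _ htl hne

theorem level_done {k s : ℕ} (hk : k ≤ s) {σ τ : List Bool} (hσ : σ ∈ allStrings (s + 1))
    (hτ : τ ∈ allStrings (s + 1)) (hne : σ ≠ τ) :
    Done e1 e2 (level e1 e2 (s + 1)) (k, σ, τ) :=
  foldl_done e1 e2 hp1 hp2 (tasks s) _ (k, σ, τ) (tasks_mem hk hσ hτ) hne

theorem G_inj : Function.Injective (G e1 e2) := by
  classical
  intro x y hxy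
  by_contra hne
  have hex : ∃ s, x s ≠ y s := by
    by_contra h
    push_neg at h
    exact hne (funext h)
  have hs : x (Nat.find hex) ≠ y (Nat.find hex) := Nat.find_spec hex
  set s := Nat.find hex with hsdef
  have hstr : str x s = str y s :=
    List.map_congr_left fun a ha =>
      not_not.mp (Nat.find_min hex (List.mem_range.mp ha))
  have key : ∀ z : ℕ → Bool, str z s = str x s →
      G e1 e2 z ((level e1 e2 s (str x s)).length) = z s := by
    intro z hz
    have hpre : level e1 e2 s (str x s) ++ [z s] <+: level e1 e2 (s + 1) (str z (s + 1)) := by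
      rw [← hz]
      exact level_child_prefix e1 e2 hp1 hp2 z s
    have hlen : (level e1 e2 s (str x s)).length <
        (level e1 e2 (s + 1) (str z (s + 1))).length :=
      lt_of_lt_of_le (by simp) hpre.length_le
    rw [G_eq e1 e2 hp1 hp2 z hlen, getD_of_prefix hpre (by simp),
      List.getD_append_right _ _ _ _ (le_refl _)]
    simp
  have hxs := key x rfl
  have hys := key y hstr.symm
  rw [hxy] at hxs
  exact hs (hxs.symm.trans hys)

theorem G_avoid (F : ℕ → (ℕ → Bool) → (ℕ → Bool) → Prop)
    (hav : ∀ k p q A B, Agrees A (e1 k p q) → Agrees B (e2 k p q) → ¬ F k A B)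
    {x y : ℕ → Bool} (hxy : x ≠ y) (k : ℕ) : ¬ F k (G e1 e2 x) (G e1 e2 y) := by
  have hex : ∃ s, x s ≠ y s := by
    by_contra h
    push_neg at h
    exact hxy (funext h)
  obtain ⟨s₀, hs₀⟩ := hex
  set s := max k s₀ with hsdef
  have hstr : str x (s + 1) ≠ str y (s + 1) := by
    intro h
    have := congrArg (fun l => l.getD s₀ false) h
    rw [str_getD (by omega), str_getD (by omega)] at this
    exact hs₀ this
  obtain ⟨p, q, h1, h2⟩ := level_done e1 e2 hp1 hp2 (le_max_left k s₀)
    (str_mem_allStrings x (s + 1)) (str_mem_allStrings y (s + 1)) hstr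
  exact hav k p q _ _
    (agrees_of_prefix h1 (G_agrees e1 e2 hp1 hp2 x (s + 1)))
    (agrees_of_prefix h2 (G_agrees e1 e2 hp1 hp2 y (s + 1)))

end Construction

theorem exists_family (F : ℕ → (ℕ → Bool) → (ℕ → Bool) → Prop)
    (hF : ∀ k p q, ∃ p' q' : List Bool, p <+: p' ∧ q <+: q' ∧
      ∀ A B : ℕ → Bool, Agrees A p' → Agrees B q' → ¬ F k A B) :
    ∃ G : (ℕ → Bool) → (ℕ → Bool), Function.Injective G ∧
      ∀ x y, x ≠ y → ∀ k, ¬ F k (G x) (G y) := by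
  choose e1 e2 hp1 hp2 hav using hF
  exact ⟨G e1 e2, G_inj e1 e2 hp1 hp2,
    fun x y hxy k => G_avoid e1 e2 hp1 hp2 F hav hxy k⟩

/-! ### Coding sets as equivalence relations -/

/-- The equivalence relation coding `A`: classes are `{2k, 2k+1}` for `A k = true`,
and singletons otherwise. -/
def ER (A : ℕ → Bool) (m n : ℕ) : Prop :=
  m = n ∨ ∃ k, A k = true ∧ ((m = 2*k ∧ n = 2*k+1) ∨ (m = 2*k+1 ∧ n = 2*k))

theorem ER_equiv (A : ℕ → Bool) : Equivalence (ER A) := by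
  constructor
  · intro m; exact Or.inl rfl
  · intro m n h
    rcases h with rfl | ⟨k, hk, hp⟩
    · exact Or.inl rfl
    · refine Or.inr ⟨k, hk, ?_⟩; tauto
  · intro m n p h1 h2
    rcases h1 with rfl | ⟨k, hk, hp⟩
    · exact h2
    · rcases h2 with rfl | ⟨k', hk', hp'⟩
      · exact Or.inr ⟨k, hk, hp⟩
      · rcases hp with ⟨h1, h2⟩ | ⟨h1, h2⟩ <;> rcases hp' with ⟨h3, h4⟩ | ⟨h3, h4⟩ <;>
          first | (left; omega) | (exfalso; omega)

theorem ER_pair (A : ℕ → Bool) (k : ℕ) : ER A (2*k) (2*k+1) ↔ A k = true := by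
  constructor
  · intro h
    rcases h with h | ⟨k', hk', hp⟩
    · omega
    · have : k' = k := by omega
      subst this; exact hk'
  · intro h
    exact Or.inr ⟨k, h, Or.inl ⟨rfl, rfl⟩⟩

theorem ER_inj : Function.Injective ER := by
  intro A B h
  funext n
  have hiff : (A n = true) ↔ (B n = true) := by
    rw [← ER_pair A n, ← ER_pair B n, h]
  cases hA : A n <;> cases hB : B n <;> simp_all

/-- From a computable reduction between coded relations, extract the key equation. -/
theorem red_key (A B : ℕ → Bool) (v : ℕ → ℕ)
    (h : ∀ m n, ER A m n ↔ ER B (v m) (v n)) :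
    ∀ n, A n = true ↔ ((v (2*n) = v (2*n+1)) ∨
      ((∃ m, (v (2*n) = 2*m ∧ v (2*n+1) = 2*m+1) ∨ (v (2*n) = 2*m+1 ∧ v (2*n+1) = 2*m)) ∧
        B (v (2*n) / 2) = true)) := by
  intro n
  constructor
  · intro hA
    have hB : ER B (v (2*n)) (v (2*n+1)) := (h _ _).mp ((ER_pair A n).mpr hA)
    rcases hB with heq | ⟨m, hm, hp⟩
    · exact Or.inl heq
    · refine Or.inr ⟨⟨m, hp⟩, ?_⟩
      have hd : v (2*n) / 2 = m := by rcases hp with ⟨h1, _⟩ | ⟨h1, _⟩ <;> omega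
      rw [hd]; exact hm
  · intro hR
    have hB : ER B (v (2*n)) (v (2*n+1)) := by
      rcases hR with heq | ⟨⟨m, hp⟩, hBm⟩
      · exact Or.inl heq
      · refine Or.inr ⟨m, ?_, hp⟩
        have hd : v (2*n) / 2 = m := by rcases hp with ⟨h1, _⟩ | ⟨h1, _⟩ <;> omega
        rwa [hd] at hBm
    exact (ER_pair A n).mp ((h _ _).mpr hB)

end CredAC

/-- there are continuum many pairwise `≤_c`-incomparable equivalence
relations on `ℕ`. -/
theorem cred_antichain :
    ∃ S : Set (ℕ → ℕ → Prop),
      (∀ R ∈ S, Equivalence R) ∧ Cardinal.mk S = 2 ^ Cardinal.aleph0 ∧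
      ∀ R ∈ S, ∀ R' ∈ S, R ≠ R' → ¬CRedP R R' ∧ ¬CRedP R' R := by
  classical
  obtain ⟨e, he⟩ : ∃ e : ℕ → ℕ → ℕ, ∀ v : ℕ → ℕ, Computable v → ∃ k, e k = v := by
    have hcode : ∀ f : {f : ℕ → ℕ // Computable f}, ∃ c : Nat.Partrec.Code,
        c.eval = fun n => Part.some (f.1 n) :=
      fun f => Nat.Partrec.Code.exists_code.mp (Partrec.nat_iff.mp f.2)
    choose cd hcd using hcode
    have hinj : Function.Injective cd := by
      intro f g hfg
      have : (fun n => Part.some (f.1 n)) = fun n => Part.some (g.1 n) := by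
        rw [← hcd f, ← hcd g, hfg]
      ext n
      have := congrFun this n
      simpa using this
    have : Countable {f : ℕ → ℕ // Computable f} := hinj.countable
    have : Nonempty {f : ℕ → ℕ // Computable f} := ⟨⟨id, Computable.id⟩⟩
    obtain ⟨g, hg⟩ := exists_surjective_nat {f : ℕ → ℕ // Computable f}
    refine ⟨fun k => (g k).1, fun v hv => ?_⟩
    obtain ⟨k, hk⟩ := hg ⟨v, hv⟩
    exact ⟨k, congrArg Subtype.val hk⟩
  set F : ℕ → (ℕ → Bool) → (ℕ → Bool) → Prop := fun k A B => ∀ n,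
    A n = true ↔ ((e k (2*n) = e k (2*n+1)) ∨
      ((∃ m, (e k (2*n) = 2*m ∧ e k (2*n+1) = 2*m+1) ∨
        (e k (2*n) = 2*m+1 ∧ e k (2*n+1) = 2*m)) ∧ B (e k (2*n) / 2) = true)) with hFdef
  have hF : ∀ k p q, ∃ p' q' : List Bool, p <+: p' ∧ q <+: q' ∧
      ∀ A B : ℕ → Bool, CredAC.Agrees A p' → CredAC.Agrees B q' → ¬ F k A B :=
    fun k p q => CredAC.force (fun n => e k (2*n) = e k (2*n+1))
      (fun n => ∃ m, (e k (2*n) = 2*m ∧ e k (2*n+1) = 2*m+1) ∨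
        (e k (2*n) = 2*m+1 ∧ e k (2*n+1) = 2*m))
      (fun n => e k (2*n) / 2) p q
  obtain ⟨G, hGinj, hGav⟩ := CredAC.exists_family F hF
  refine ⟨Set.range fun x => CredAC.ER (G x), ?_, ?_, ?_⟩
  · rintro R ⟨x, rfl⟩
    exact CredAC.ER_equiv _
  · rw [Cardinal.mk_range_eq _ (fun a b hab => hGinj (CredAC.ER_inj hab))]
    simp [Cardinal.mk_arrow]
  · rintro R ⟨x, rfl⟩ R' ⟨y, rfl⟩ hne
    have hxy : x ≠ y := by
      rintro rfl; exact hne rfl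
    constructor
    · rintro ⟨v, hv, hred⟩
      obtain ⟨k, hk⟩ := he v hv
      subst hk
      exact hGav x y hxy k (CredAC.red_key _ _ _ hred)
    · rintro ⟨v, hv, hred⟩
      obtain ⟨k, hk⟩ := he v hv
      subst hk
      exact hGav y x hxy.symm k (CredAC.red_key _ _ _ hred)
end
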